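/- Let x : [0,∞) → ℝ be monotonically nondecreasing with 0 ≤ x(b) ≤ 1 for all b ≥ 0, and let p, μ : [0,∞) → ℝ. Suppose that (i) for all 0 ≤ b < b' the sandwich inequality b·(x(b') − x(b)) ≤ p(b') − p(b) ≤ b'·(x(b') − x(b)) holds, and (ii) for all b, b' ≥ 0 one has μ(b') − μ(b) ≤ (p(b') − p(b)) − b·(x(b') − x(b)). Then μ is constant: μ(b') = μ(b) for all b, b' ≥ 0. -/

import Mathlib

/-- revenue-tick lemma on the continuous domain `[0, ∞)`:
the platform revenue `μ` must be constant. -/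
theorem revenue_constant_continuous
    (x p μ : ℝ → ℝ)
    (hx01 : ∀ b : ℝ, 0 ≤ b → 0 ≤ x b ∧ x b ≤ 1)
    (hmono : ∀ a b : ℝ, 0 ≤ a → a ≤ b → x a ≤ x b)
    (hsand : ∀ b b' : ℝ, 0 ≤ b → b < b' →
      b * (x b' - x b) ≤ p b' - p b ∧ p b' - p b ≤ b' * (x b' - x b))
    (hcol : ∀ b b' : ℝ, 0 ≤ b → 0 ≤ b' →
      μ b' - μ b ≤ (p b' - p b) - b * (x b' - x b)) :
    ∀ b b' : ℝ, 0 ≤ b → 0 ≤ b' → μ b' = μ b := by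
  -- key one-step estimate
  have key : ∀ a a' : ℝ, 0 ≤ a → a < a' →
      μ a' - μ a ≤ (a' - a) * (x a' - x a) ∧
      μ a - μ a' ≤ (a' - a) * (x a' - x a) := by
    intro a a' ha hlt
    have ha' : 0 ≤ a' := le_of_lt (lt_of_le_of_lt ha hlt)
    obtain ⟨hs1, hs2⟩ := hsand a a' ha hlt
    constructor
    · have h1 := hcol a a' ha ha'
      nlinarith
    · have h2 := hcol a' a ha' ha
      nlinarith
  -- main: for a ≤ b' with 0 ≤ a, μ b' - μ a ≤ ε and μ a - μ b' ≤ ε for all ε > 0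
  have main : ∀ a a' : ℝ, 0 ≤ a → a < a' → μ a' = μ a := by
    intro a a' ha hlt
    have hd : (0:ℝ) < a' - a := by linarith
    have bound : ∀ n : ℕ, 0 < n →
        μ a' - μ a ≤ (a' - a) / n ∧ μ a - μ a' ≤ (a' - a) / n := by
      intro n hn
      set h := (a' - a) / n with hh
      have hnpos : (0:ℝ) < n := by exact_mod_cast hn
      have hpos : 0 < h := div_pos hd hnpos
      set t : ℕ → ℝ := fun i => a + i * h with ht
      have ht0 : t 0 = a := by simp [ht]
      have htn : t n = a' := by
        simp only [ht, hh]; rw [mul_div_assoc', mul_div_cancel_left₀ _ hnpos.ne']; ring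
      have htnn : ∀ i : ℕ, 0 ≤ t i := by
        intro i
        have : (0:ℝ) ≤ i * h := mul_nonneg (Nat.cast_nonneg i) hpos.le
        simp [ht]; linarith
      have hstep : ∀ i : ℕ, t (i+1) - t i = h := by
        intro i; simp [ht]; ring
      have hlt' : ∀ i : ℕ, t i < t (i+1) := by
        intro i; have := hstep i; linarith
      -- telescoping sums
      have tel1 : ∑ i ∈ Finset.range n, (μ (t (i+1)) - μ (t i)) = μ a' - μ a := by
        rw [Finset.sum_range_sub (fun i => μ (t i)), ht0, htn]
      have tel2 : ∑ i ∈ Finset.range n, (μ (t i) - μ (t (i+1))) = μ a - μ a' := by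
        have := Finset.sum_range_sub' (fun i => μ (t i)) n
        simpa [ht0, htn] using this
      have telx : ∑ i ∈ Finset.range n, (x (t (i+1)) - x (t i)) = x a' - x a := by
        rw [Finset.sum_range_sub (fun i => x (t i)), ht0, htn]
      have hxb : x a' - x a ≤ 1 := by
        have h1 := (hx01 a ha).1
        have h2 := (hx01 a' (le_of_lt (lt_of_le_of_lt ha hlt))).2
        linarith
      have sumle : ∀ (f : ℕ → ℝ),
          (∀ i ∈ Finset.range n, f i ≤ h * (x (t (i+1)) - x (t i))) →
          ∑ i ∈ Finset.range n, f i ≤ h := by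
        intro f hf
        calc ∑ i ∈ Finset.range n, f i
            ≤ ∑ i ∈ Finset.range n, h * (x (t (i+1)) - x (t i)) :=
              Finset.sum_le_sum hf
          _ = h * (x a' - x a) := by rw [← Finset.mul_sum, telx]
          _ ≤ h * 1 := by
              apply mul_le_mul_of_nonneg_left hxb hpos.le
          _ = h := mul_one h
      constructor
      · rw [← tel1]
        apply sumle
        intro i _
        have := (key (t i) (t (i+1)) (htnn i) (hlt' i)).1
        rw [hstep i] at this; exact this
      · rw [← tel2]
        apply sumle
        intro i _
        have := (key (t i) (t (i+1)) (htnn i) (hlt' i)).2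
        rw [hstep i] at this; exact this
    -- conclude both differences are ≤ 0
    have hle : ∀ c : ℝ, (∀ n : ℕ, 0 < n → c ≤ (a' - a) / n) → c ≤ 0 := by
      intro c hc
      by_contra hcon
      push_neg at hcon
      obtain ⟨n, hn⟩ := exists_nat_gt ((a' - a) / c)
      have hn0 : 0 < n := by
        by_contra h0
        push_neg at h0
        interval_cases n
        · simp at hn
          exact absurd hn (not_lt.mpr (div_nonneg hd.le hcon.le))
      have hnpos : (0:ℝ) < n := by exact_mod_cast hn0
      have := hc n hn0
      have h1 : (a' - a) / c < n := hn
      have h2 : (a' - a) / n < c := by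
        rw [div_lt_iff₀ hnpos]
        have := mul_lt_mul_of_pos_right h1 hcon
        have heq : (a' - a) / c * c = a' - a := div_mul_cancel₀ _ (ne_of_gt hcon)
        nlinarith
      linarith
    have h1 := hle (μ a' - μ a) (fun n hn => (bound n hn).1)
    have h2 := hle (μ a - μ a') (fun n hn => (bound n hn).2)
    linarith
  intro b b' hb hb'
  rcases lt_trichotomy b b' with h | h | h
  · exact main b b' hb h
  · rw [h]
  · exact (main b' b hb' h).symm
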